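/- Let Φ be a finite reduced crystallographic root system with positive system Φ^+, let β ∈ Φ^+, and let λ be a coweight. Then ℓ^S(s_β λ) < ℓ^S(λ) if and only if β(λ) < 0. -/

import Mathlib

open Module

/-- A finite reduced crystallographic root system, spanning the dual of the real vector
space `V`, together with a chosen positive system.  Roots are linear functionals on `V`,
and `coroot` associates to each root its coroot in `V`. -/
structure PosRootSystem (V : Type*) [AddCommGroup V] [Module ℝ V] where
  /-- the set of roots -/
  roots : Finset (Dual ℝ V)
  /-- the set of positive roots -/
  pos : Finset (Dual ℝ V)
  /-- the coroot of a root -/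
  coroot : Dual ℝ V → V
  pos_subset : pos ⊆ roots
  mem_roots_iff : ∀ α, α ∈ roots ↔ (α ∈ pos ∨ -α ∈ pos)
  neg_not_pos : ∀ α ∈ pos, -α ∉ pos
  add_mem_pos : ∀ α ∈ pos, ∀ β ∈ pos, α + β ∈ roots → α + β ∈ pos
  root_coroot_two : ∀ α ∈ roots, α (coroot α) = 2
  crystallographic : ∀ α ∈ roots, ∀ β ∈ roots, ∃ n : ℤ, α (coroot β) = n
  reduced : ∀ α ∈ roots, ∀ c : ℝ, c • α ∈ roots → c = 1 ∨ c = -1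
  reflect_mem : ∀ α ∈ roots, ∀ β ∈ roots, α - α (coroot β) • β ∈ roots
  span_top : Submodule.span ℝ (roots : Set (Dual ℝ V)) = ⊤

namespace PosRootSystem

variable {V : Type*} [AddCommGroup V] [Module ℝ V] (P : PosRootSystem V)

/-- `x` is a coweight: every root takes an integer value on it. -/
def IsCoweight (x : V) : Prop := ∀ α ∈ P.roots, ∃ n : ℤ, α x = n

/-- The function `f(m) = -m` for `m ≤ 0` and `f(m) = m - 1` for `m > 0`. -/
noncomputable def lenAux (m : ℝ) : ℝ := if m ≤ 0 then -m else m - 1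

/-- `ℓ^S(x) = Σ_{α ∈ Φ⁺} f(α(x))`, the length of the minimal coset representative of the
translation `x` in the affine Weyl group modulo the finite Weyl group. -/
noncomputable def lS (x : V) : ℝ := ∑ α ∈ P.pos, lenAux (α x)

/-- The linear reflection `s_β x = x - β(x)·β^∨`. -/
def sRefl (β : Dual ℝ V) (x : V) : V := x - β x • P.coroot β

/-- The affine reflection `r_β x = s_β x + β^∨` in the hyperplane `β = 1`. -/
def rRefl (β : Dual ℝ V) (x : V) : V := P.sRefl β x + P.coroot β

/-- `(α, α')` is a `β`-positive pair: `α, α'` are positive roots with `α(β^∨) < 0`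
and `s_β α = α'`. -/
def IsPosPair (β α α' : Dual ℝ V) : Prop :=
  α ∈ P.pos ∧ α' ∈ P.pos ∧ α (P.coroot β) < 0 ∧ α - α (P.coroot β) • β = α'

/-- `(α, α')` is a `β`-negative pair: `α, α'` are positive roots with `s_β α = -α'`. -/
def IsNegPair (β α α' : Dual ℝ V) : Prop :=
  α ∈ P.pos ∧ α' ∈ P.pos ∧ α - α (P.coroot β) • β = -α'

/-- The opposite sign condition for `(β, x)`: the two members of every `β`-negative pair
take values of strictly opposite signs on `x`. -/
def OppositeSignCondition (β : Dual ℝ V) (x : V) : Prop :=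
  ∀ α α' : Dual ℝ V, P.IsNegPair β α α' →
    (α x < 0 ∧ 0 < α' x) ∨ (0 < α x ∧ α' x < 0)

end PosRootSystem

namespace PosRootSystem

variable {V : Type*} [AddCommGroup V] [Module ℝ V] (P : PosRootSystem V)

lemma root_ne_zero {α : Dual ℝ V} (h : α ∈ P.roots) : α ≠ 0 := by
  intro h0
  have := P.root_coroot_two α h
  rw [h0] at this
  simp at this

/-- the reflection of `u` in the root `γ` -/
noncomputable def sg (γ u : Dual ℝ V) : Dual ℝ V := u - u (P.coroot γ) • γ

lemma sg_mem {γ u : Dual ℝ V} (hγ : γ ∈ P.roots) (hu : u ∈ P.roots) :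
    P.sg γ u ∈ P.roots := P.reflect_mem u hu γ hγ

lemma sg_sg {γ : Dual ℝ V} (hγ : γ ∈ P.roots) (u : Dual ℝ V) :
    P.sg γ (P.sg γ u) = u := by
  have h2 := P.root_coroot_two γ hγ
  simp only [sg, LinearMap.sub_apply, LinearMap.smul_apply, h2, smul_eq_mul]
  module

lemma sg_neg (γ u : Dual ℝ V) : P.sg γ (-u) = -(P.sg γ u) := by
  simp only [sg, LinearMap.neg_apply]
  module

/-- reflection formula on a combination of two roots -/
lemma sg_combo {α γ : Dual ℝ V} (hα : α ∈ P.roots) {d : ℝ} (hd : γ (P.coroot α) = d)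
    (p q : ℝ) :
    P.sg α (p • α + q • γ) = (-p - q * d) • α + q • γ := by
  have h2 := P.root_coroot_two α hα
  simp only [sg, LinearMap.add_apply, LinearMap.smul_apply, h2, hd, smul_eq_mul]
  module

end PosRootSystem
namespace PosRootSystem

variable {V : Type*} [AddCommGroup V] [Module ℝ V] {P : PosRootSystem V}

lemma exists_rep (u : ℕ → Dual ℝ V) (h : ∀ k, u k ∈ P.roots) :
    ∃ i j, i ≠ j ∧ u i = u j := by
  by_contra hc
  push_neg at hc
  have hinj : Function.Injective u := by
    intro i j hij
    by_contra hne
    exact hc i j hne hij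
  have : (P.roots : Set (Dual ℝ V)).Infinite :=
    Set.infinite_of_injective_forall_mem hinj (fun k => h k)
  exact this P.roots.finite_toSet

/-- Key lemma: if `γ(α^∨) < 0` then `α + γ` is a root, unless `γ = -α`. -/
lemma add_mem_or_eq_neg {α γ : Dual ℝ V} (hα : α ∈ P.roots) (hγ : γ ∈ P.roots)
    (h : γ (P.coroot α) < 0) : α + γ ∈ P.roots ∨ γ = -α := by
  classical
  obtain ⟨d, hd⟩ := P.crystallographic γ hγ α hα
  obtain ⟨n, hn⟩ := P.crystallographic α hα γ hγ
  have h2α : α (P.coroot α) = 2 := P.root_coroot_two α hα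
  have h2γ : γ (P.coroot γ) = 2 := P.root_coroot_two γ hγ
  have hd0 : d < 0 := by
    rw [hd] at h
    exact_mod_cast h
  have hd1 : d ≤ -1 := by omega
  by_cases hdm1 : d = -1
  · -- s_α γ = γ + α is a root
    left
    have hmem := P.sg_mem hα hγ
    rw [sg, hd, hdm1] at hmem
    have he : γ - ((-1 : ℤ) : ℝ) • α = α + γ := by push_cast; module
    rwa [he] at hmem
  by_cases hnm1 : n = -1
  · left
    have hmem := P.sg_mem hγ hα
    rw [sg, hn, hnm1] at hmem
    have he : α - ((-1 : ℤ) : ℝ) • γ = α + γ := by push_cast; module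
    rwa [he] at hmem
  have hd2 : d ≤ -2 := by omega
  by_cases hn0 : n = 0
  · -- orbit 2kd•α + γ is infinite : contradiction
    exfalso
    have step : ∀ e : ℝ, P.sg γ (P.sg α (P.sg γ (P.sg α (e • α + γ)))) =
        (e + 2 * (d : ℝ)) • α + γ := by
      intro e
      simp only [sg, LinearMap.add_apply, LinearMap.sub_apply, LinearMap.smul_apply,
        h2α, h2γ, hd, hn, hn0, Int.cast_zero, smul_eq_mul]
      module
    set w : ℕ → Dual ℝ V := fun k => (2 * (k : ℝ) * (d : ℝ)) • α + γ with hw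
    have hmem : ∀ k, w k ∈ P.roots := by
      intro k
      induction k with
      | zero => simpa [hw] using hγ
      | succ k ih =>
        have hm := P.sg_mem hγ (P.sg_mem hα (P.sg_mem hγ (P.sg_mem hα ih)))
        rw [step] at hm
        have hco : (2 * ((k + 1 : ℕ) : ℝ) * (d : ℝ)) = 2 * (k : ℝ) * d + 2 * d := by
          push_cast; ring
        show (2 * ((k + 1 : ℕ) : ℝ) * (d : ℝ)) • α + γ ∈ P.roots
        rw [hco]; exact hm
    obtain ⟨i, j, hij, he⟩ := exists_rep w hmem
    have key : (2 * (i : ℝ) * d - 2 * (j : ℝ) * d) • α = w i - w j := by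
      simp only [hw]; module
    rw [he, sub_self] at key
    rcases smul_eq_zero.mp key with hc | hc
    · have hijR : (i : ℝ) ≠ (j : ℝ) := by exact_mod_cast hij
      have hdR : (d : ℝ) ≠ 0 := by exact_mod_cast hd0.ne
      apply hijR
      have : ((i : ℝ) - j) * (2 * d) = 0 := by linarith [hc, (by ring : 2 * (i:ℝ) * d - 2 * (j:ℝ) * d = ((i:ℝ) - j) * (2*d))]
      rcases mul_eq_zero.mp this with h1 | h2
      · linarith [sub_eq_zero.mp h1]
      · exact absurd h2 (by positivity)
    · exact P.root_ne_zero hα hc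
  by_cases hpar : n = -2 ∧ d = -2
  · obtain ⟨hn2, hd2'⟩ := hpar
    right
    have step : ∀ p q : ℝ, P.sg γ (P.sg α (p • α + q • γ)) =
        (-p + 2*q) • α + (-2*p + 3*q) • γ := by
      intro p q
      simp only [sg, LinearMap.add_apply, LinearMap.sub_apply, LinearMap.smul_apply,
        h2α, h2γ, hd, hn, hn2, hd2', smul_eq_mul]
      push_cast
      module
    set w : ℕ → Dual ℝ V := fun k => (1 - 2*(k:ℝ)) • α + (-2*(k:ℝ)) • γ with hw
    have hmem : ∀ k, w k ∈ P.roots := by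
      intro k
      induction k with
      | zero => simpa [hw] using hα
      | succ k ih =>
        have hm := P.sg_mem hγ (P.sg_mem hα ih)
        rw [step] at hm
        have hco : w (k+1) = (-(1 - 2*(k:ℝ)) + 2*(-2*(k:ℝ))) • α
            + (-2*(1-2*(k:ℝ)) + 3*(-2*(k:ℝ))) • γ := by
          simp only [hw]; push_cast; module
        rw [hco]; exact hm
    obtain ⟨i, j, hij, he⟩ := exists_rep w hmem
    have key : (2*(j:ℝ) - 2*(i:ℝ)) • (α + γ) = w i - w j := by
      simp only [hw]; module
    rw [he, sub_self] at key
    rcases smul_eq_zero.mp key with hc | hc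
    · exfalso
      have hji : (j:ℝ) = i := by linarith [hc]
      exact hij (by exact_mod_cast hji.symm)
    · exact eq_neg_of_add_eq_zero_left (by rwa [add_comm] at hc)
  -- hyperbolic case
  have ht : 3 ≤ |n*d - 2| := by
    rcases le_or_gt 1 n with h1 | h1
    · have hnd : n*d ≤ -2 := by nlinarith
      exact le_abs.mpr (Or.inr (by linarith))
    · have hn2' : n ≤ -2 := by omega
      have hnd : 5 ≤ n*d := by
        rcases (not_and_or.mp hpar) with hh | hh
        · have h3 : n ≤ -3 := by omega
          nlinarith
        · have h3 : d ≤ -3 := by omega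
          nlinarith
      exact le_abs.mpr (Or.inl (by linarith))
  set t : ℤ := n*d - 2 with hts
  set A : ℕ → ℤ × ℤ := fun k => Nat.rec ((1:ℤ), (0:ℤ))
    (fun _ p => (-p.1 - d * p.2, n * p.1 + (n*d - 1) * p.2)) k with hA
  have hA0 : A 0 = (1, 0) := rfl
  have hAs : ∀ k, A (k+1) = (-(A k).1 - d * (A k).2, n * (A k).1 + (n*d - 1) * (A k).2) :=
    fun k => rfl
  have hrec : ∀ k, (A (k+2)).1 = t * (A (k+1)).1 - (A k).1 := by
    intro k
    rw [hAs (k+1), hAs k, hts]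
    simp only []
    ring
  have hmono : ∀ k, 1 ≤ |(A (k+1)).1| ∧ |(A (k+1)).1| < |(A (k+2)).1| := by
    intro k
    induction k with
    | zero =>
      show 1 ≤ |(A 1).1| ∧ |(A 1).1| < |(A 2).1|
      have e1 : (A 1).1 = -1 := by
        have e1' : (A 1).1 = -(1:ℤ) - d * 0 := rfl
        rw [e1']; ring
      have e0 : (A 0).1 = 1 := rfl
      have e2 : (A 2).1 = t * (A 1).1 - (A 0).1 := hrec 0
      rw [e1, e0] at e2
      refine ⟨by rw [e1]; norm_num, ?_⟩
      rw [e1, e2]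
      rcases le_abs.mp ht with h3 | h3
      · rw [abs_of_nonpos (by linarith : t*(-1) - 1 ≤ 0),
          abs_of_neg (by norm_num : (-1:ℤ) < 0)]
        linarith
      · rw [abs_of_nonneg (by linarith : (0:ℤ) ≤ t*(-1) - 1),
          abs_of_neg (by norm_num : (-1:ℤ) < 0)]
        linarith
    | succ k ih =>
      obtain ⟨ih1, ih2⟩ := ih
      refine ⟨by linarith, ?_⟩
      have h1 : |t * (A (k+2)).1| - |(A (k+1)).1| ≤ |t * (A (k+2)).1 - (A (k+1)).1| :=
        abs_sub_abs_le_abs_sub _ _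
      rw [abs_mul] at h1
      have h3 : 3 * |(A (k+2)).1| ≤ |t| * |(A (k+2)).1| := by
        have := abs_nonneg (A (k+2)).1
        nlinarith
      have hr : (A (k+3)).1 = t * (A (k+2)).1 - (A (k+1)).1 := hrec (k+1)
      show |(A (k+2)).1| < |(A (k+3)).1|
      rw [hr]
      linarith
  have hinj : ∀ i j : ℕ, (A (i+1)).1 = (A (j+1)).1 → i = j := by
    intro i j hij
    have hsm : StrictMono (fun k => |(A (k+1)).1|) :=
      strictMono_nat_of_lt_succ (fun k => (hmono k).2)
    exact hsm.injective (show |(A (i+1)).1| = |(A (j+1)).1| by rw [hij])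
  have step : ∀ p q : ℤ, P.sg γ (P.sg α (((p:ℝ)) • α + ((q:ℝ)) • γ)) =
      ((-p - d*q : ℤ):ℝ) • α + ((n*p + (n*d-1)*q : ℤ):ℝ) • γ := by
    intro p q
    simp only [sg, LinearMap.add_apply, LinearMap.sub_apply, LinearMap.smul_apply,
      h2α, h2γ, hd, hn, smul_eq_mul]
    push_cast
    module
  have hmem : ∀ k, (((A k).1 : ℝ)) • α + (((A k).2 : ℝ)) • γ ∈ P.roots := by
    intro k
    induction k with
    | zero => rw [hA0]; simpa using hα
    | succ k ih =>
      have hm := P.sg_mem hγ (P.sg_mem hα ih)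
      rw [step] at hm
      rw [hAs k]
      exact hm
  obtain ⟨i, j, hij, he⟩ := exists_rep
    (fun k => (((A (k+1)).1 : ℝ)) • α + (((A (k+1)).2 : ℝ)) • γ) (fun k => hmem (k+1))
  have he2 : (((A (i+1)).1 : ℝ)) • α + (((A (i+1)).2 : ℝ)) • γ
      = (((A (j+1)).1 : ℝ)) • α + (((A (j+1)).2 : ℝ)) • γ := he
  have haIJ : (A (i+1)).1 ≠ (A (j+1)).1 := fun hcc => hij (hinj _ _ hcc)
  have key : (((A (i+1)).1 : ℝ) - ((A (j+1)).1 : ℝ)) • α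
      - (((A (j+1)).2 : ℝ) - ((A (i+1)).2:ℝ)) • γ
      = ((((A (i+1)).1:ℝ)) • α + (((A (i+1)).2:ℝ)) • γ)
        - ((((A (j+1)).1:ℝ)) • α + (((A (j+1)).2:ℝ)) • γ) := by module
  rw [he2, sub_self] at key
  have hc : (((A (i+1)).1 : ℝ) - ((A (j+1)).1 : ℝ)) • α
      = (((A (j+1)).2 : ℝ) - ((A (i+1)).2:ℝ)) • γ := sub_eq_zero.mp key
  have hne : (((A (i+1)).1 : ℝ) - ((A (j+1)).1 : ℝ)) ≠ 0 :=
    sub_ne_zero.mpr (by exact_mod_cast haIJ)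
  have hαc : α = ((((A (i+1)).1 : ℝ) - ((A (j+1)).1 : ℝ))⁻¹
      * (((A (j+1)).2 : ℝ) - ((A (i+1)).2:ℝ))) • γ := by
    rw [← smul_smul, ← hc, smul_smul, inv_mul_cancel₀ hne, one_smul]
  rcases P.reduced γ hγ _ (by rw [← hαc]; exact hα) with h1 | h1
  · exfalso
    rw [h1, one_smul] at hαc
    rw [hαc, h2γ] at hd
    have : (2:ℤ) = d := by exact_mod_cast hd
    omega
  · right
    rw [h1] at hαc
    rw [hαc]
    module

end PosRootSystem
namespace PosRootSystem

variable {V : Type*} [AddCommGroup V] [Module ℝ V] {P : PosRootSystem V}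

lemma multiset_sum_apply (t : Multiset (Dual ℝ V)) (v : V) :
    t.sum v = (t.map (fun f : Dual ℝ V => f v)).sum := by
  induction t using Multiset.induction with
  | empty => simp
  | cons a s ih => simp [Multiset.sum_cons, ih]

lemma pos_sum_ne_zero_aux : ∀ (N : ℕ) (s : Multiset (Dual ℝ V)), s.card = N → s ≠ 0 →
    (∀ a ∈ s, a ∈ P.pos) → s.sum ≠ 0 := by
  classical
  intro N
  induction N using Nat.strong_induction_on with
  | _ N ih =>
    intro s hcard hne hpos hsum
    obtain ⟨a, ha⟩ := Multiset.exists_mem_of_ne_zero hne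
    obtain ⟨t, rfl⟩ := Multiset.exists_cons_of_mem ha
    have haP : a ∈ P.pos := hpos a (Multiset.mem_cons_self a t)
    have haR : a ∈ P.roots := P.pos_subset haP
    have h2 := P.root_coroot_two a haR
    rw [Multiset.sum_cons] at hsum
    have hval : a (P.coroot a) + (t.map (fun f : Dual ℝ V => f (P.coroot a))).sum = 0 := by
      have hv := congrArg (fun f : Dual ℝ V => f (P.coroot a)) hsum
      simpa [LinearMap.add_apply, multiset_sum_apply] using hv
    have hex : ∃ b ∈ t, b (P.coroot a) < 0 := by
      by_contra hcon
      push_neg at hcon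
      have hnn : 0 ≤ (t.map (fun f : Dual ℝ V => f (P.coroot a))).sum := by
        apply Multiset.sum_nonneg
        intro x hx
        obtain ⟨b, hb, rfl⟩ := Multiset.mem_map.mp hx
        exact hcon b hb
      rw [h2] at hval
      linarith
    obtain ⟨b, hbt, hbneg⟩ := hex
    have hbP : b ∈ P.pos := hpos b (Multiset.mem_cons_of_mem hbt)
    rcases P.add_mem_or_eq_neg haR (P.pos_subset hbP) hbneg with hmem | heq
    · have habP : a + b ∈ P.pos := P.add_mem_pos a haP b hbP hmem
      have htN : t.card + 1 = N := by simpa using hcard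
      have hsum' : ((a + b) ::ₘ t.erase b).sum = 0 := by
        rw [Multiset.sum_cons]
        have : (b ::ₘ t.erase b).sum = t.sum := by rw [Multiset.cons_erase hbt]
        rw [Multiset.sum_cons] at this
        have hrw : a + b + (t.erase b).sum = a + (b + (t.erase b).sum) := by abel
        rw [hrw, this]
        exact hsum
      have hN1 : 1 ≤ N := by rw [← htN]; exact Nat.le_add_left 1 _
      refine ih (N - 1) (Nat.sub_lt hN1 one_pos) ((a + b) ::ₘ t.erase b) ?_
        (Multiset.cons_ne_zero) ?_ hsum'
      · rw [Multiset.card_cons, Multiset.card_erase_of_mem hbt, Nat.pred_eq_sub_one]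
        have hb1 : 0 < Multiset.card t := Multiset.card_pos_iff_exists_mem.mpr ⟨b, hbt⟩
        omega
      · intro x hx
        rcases Multiset.mem_cons.mp hx with rfl | hx'
        · exact habP
        · exact hpos x (Multiset.mem_cons_of_mem (Multiset.mem_of_mem_erase hx'))
    · rw [heq] at hbP
      exact P.neg_not_pos a haP hbP

lemma pos_sum_ne_zero (s : Multiset (Dual ℝ V)) (hne : s ≠ 0)
    (hpos : ∀ a ∈ s, a ∈ P.pos) : s.sum ≠ 0 :=
  pos_sum_ne_zero_aux s.card s rfl hne hpos

/-- if `α` is positive but `s_β α` is not, then `α(β^∨) ≥ 1`. -/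
lemma one_le_pairing {α β : Dual ℝ V} (hβ : β ∈ P.pos) (hα : α ∈ P.pos)
    (hs : P.sg β α ∉ P.pos) : 1 ≤ α (P.coroot β) := by
  classical
  have hβR : β ∈ P.roots := P.pos_subset hβ
  have hαR : α ∈ P.roots := P.pos_subset hα
  obtain ⟨c, hc⟩ := P.crystallographic α hαR β hβR
  have hsgR : P.sg β α ∈ P.roots := P.sg_mem hβR hαR
  have hneg : -(P.sg β α) ∈ P.pos := by
    rcases (P.mem_roots_iff _).mp hsgR with h1 | h1
    · exact absurd h1 hs
    · exact h1
  by_contra hlt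
  push_neg at hlt
  have hc0 : c ≤ 0 := by
    rw [hc] at hlt
    exact_mod_cast Int.lt_add_one_iff.mp (by exact_mod_cast hlt : (c:ℤ) < 1)
  set s : Multiset (Dual ℝ V) :=
    α ::ₘ (-(P.sg β α)) ::ₘ Multiset.replicate (-c).toNat β with hsdef
  apply P.pos_sum_ne_zero s (Multiset.cons_ne_zero)
  · intro x hx
    rcases Multiset.mem_cons.mp hx with rfl | hx'
    · exact hα
    rcases Multiset.mem_cons.mp hx' with rfl | hx''
    · exact hneg
    · rw [Multiset.eq_of_mem_replicate hx'']
      exact hβ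
  · rw [hsdef, Multiset.sum_cons, Multiset.sum_cons, Multiset.sum_replicate]
    have h1 : -(P.sg β α) = (c:ℝ) • β - α := by
      rw [sg, hc]; module
    rw [h1]
    have h2 : ((-c).toNat : ℝ) = -(c : ℝ) := by
      have := Int.toNat_of_nonneg (by omega : 0 ≤ -c)
      exact_mod_cast congrArg (fun z : ℤ => (z : ℝ)) this
    rw [← Nat.cast_smul_eq_nsmul ℝ, h2]
    module

end PosRootSystem
namespace PosRootSystem

variable {V : Type*} [AddCommGroup V] [Module ℝ V] {P : PosRootSystem V}

/-- `f(-r) - f(r)`, the change of one summand of `ℓ^S` upon negating a root value. -/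
noncomputable def gdiff (x : V) (α : Dual ℝ V) : ℝ :=
  lenAux (-(α x)) - lenAux (α x)

lemma gdiff_eq_neg_one {x : V} {α : Dual ℝ V} (h : α x < 0) : gdiff x α = -1 := by
  rw [gdiff, lenAux, lenAux, if_neg (by linarith : ¬(-(α x) ≤ 0)), if_pos h.le]
  ring

lemma gdiff_eq_zero {x : V} {α : Dual ℝ V} (h : α x = 0) : gdiff x α = 0 := by
  rw [gdiff, lenAux, lenAux, h]
  norm_num

lemma gdiff_eq_one {x : V} {α : Dual ℝ V} (h : 0 < α x) : gdiff x α = 1 := by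
  rw [gdiff, lenAux, lenAux, if_pos (by linarith : -(α x) ≤ 0), if_neg (by linarith)]
  ring

lemma gdiff_le_one {x : V} {α : Dual ℝ V} : gdiff x α ≤ 1 := by
  rcases lt_trichotomy (α x) 0 with h | h | h
  · rw [gdiff_eq_neg_one h]; norm_num
  · rw [gdiff_eq_zero h]; norm_num
  · rw [gdiff_eq_one h]

lemma neg_one_le_gdiff {x : V} {α : Dual ℝ V} : -1 ≤ gdiff x α := by
  rcases lt_trichotomy (α x) 0 with h | h | h
  · rw [gdiff_eq_neg_one h]
  · rw [gdiff_eq_zero h]; norm_num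
  · rw [gdiff_eq_one h]; norm_num


open PosRootSystem in
theorem lS_sRefl_lt_iff' {V : Type*} [AddCommGroup V] [Module ℝ V] (P : PosRootSystem V)
    (β : Module.Dual ℝ V) (hβ : β ∈ P.pos) (x : V) :
    P.lS (P.sRefl β x) < P.lS x ↔ β x < 0 := by
  classical
  have hβR : β ∈ P.roots := P.pos_subset hβ
  have h2β : β (P.coroot β) = 2 := P.root_coroot_two β hβR
  -- Step A: `ℓ^S(s_β x)` as a sum of reflected roots evaluated at `x`
  have hA : P.lS (P.sRefl β x) = ∑ α ∈ P.pos, lenAux ((P.sg β α) x) := by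
    simp only [lS]
    apply Finset.sum_congr rfl
    intro α hα
    congr 1
    simp only [sRefl, sg, map_sub, map_smul,
      LinearMap.sub_apply, LinearMap.smul_apply, smul_eq_mul]
    ring
  set N := P.pos.filter (fun α => ¬ (P.sg β α ∈ P.pos)) with hN
  have hmemN : ∀ a, a ∈ N ↔ (a ∈ P.pos ∧ P.sg β a ∉ P.pos) := by
    intro a; rw [hN, Finset.mem_filter]
  -- the positive part is permuted
  have hAeq : ∑ α ∈ P.pos.filter (fun α => P.sg β α ∈ P.pos), lenAux ((P.sg β α) x)
      = ∑ α ∈ P.pos.filter (fun α => P.sg β α ∈ P.pos), lenAux (α x) := by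
    refine Finset.sum_nbij' (fun a => P.sg β a) (fun a => P.sg β a) ?_ ?_ ?_ ?_ ?_
    · intro a ha
      obtain ⟨h1, h2⟩ := Finset.mem_filter.mp ha
      exact Finset.mem_filter.mpr ⟨h2, by rw [P.sg_sg hβR]; exact h1⟩
    · intro a ha
      obtain ⟨h1, h2⟩ := Finset.mem_filter.mp ha
      exact Finset.mem_filter.mpr ⟨h2, by rw [P.sg_sg hβR]; exact h1⟩
    · intro a _; exact P.sg_sg hβR a
    · intro a _; exact P.sg_sg hβR a
    · intro a _; rfl
  -- the negative part
  have hNeq : ∑ α ∈ N, lenAux ((P.sg β α) x) = ∑ α ∈ N, lenAux (-(α x)) := by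
    refine Finset.sum_nbij' (fun a => -(P.sg β a)) (fun a => -(P.sg β a)) ?_ ?_ ?_ ?_ ?_
    · intro a ha
      obtain ⟨h1, h2⟩ := (hmemN a).mp ha
      have hmem : -(P.sg β a) ∈ P.pos := by
        rcases (P.mem_roots_iff _).mp (P.sg_mem hβR (P.pos_subset h1)) with hh | hh
        · exact absurd hh h2
        · exact hh
      refine (hmemN _).mpr ⟨hmem, ?_⟩
      rw [P.sg_neg, P.sg_sg hβR]
      exact P.neg_not_pos a h1
    · intro a ha
      obtain ⟨h1, h2⟩ := (hmemN a).mp ha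
      have hmem : -(P.sg β a) ∈ P.pos := by
        rcases (P.mem_roots_iff _).mp (P.sg_mem hβR (P.pos_subset h1)) with hh | hh
        · exact absurd hh h2
        · exact hh
      refine (hmemN _).mpr ⟨hmem, ?_⟩
      rw [P.sg_neg, P.sg_sg hβR]
      exact P.neg_not_pos a h1
    · intro a _; rw [P.sg_neg, P.sg_sg hβR, neg_neg]
    · intro a _; rw [P.sg_neg, P.sg_sg hβR, neg_neg]
    · intro a _
      congr 1
      rw [LinearMap.neg_apply, neg_neg]
  -- difference formula
  have hD : P.lS (P.sRefl β x) - P.lS x = ∑ α ∈ N, gdiff x α := by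
    have hs1 : P.lS x = ∑ α ∈ P.pos.filter (fun α => P.sg β α ∈ P.pos), lenAux (α x)
        + ∑ α ∈ N, lenAux (α x) := by
      rw [hN, lS]
      exact (Finset.sum_filter_add_sum_filter_not _ _ _).symm
    have hs2 : P.lS (P.sRefl β x)
        = ∑ α ∈ P.pos.filter (fun α => P.sg β α ∈ P.pos), lenAux ((P.sg β α) x)
        + ∑ α ∈ N, lenAux ((P.sg β α) x) := by
      rw [hA, hN]
      exact (Finset.sum_filter_add_sum_filter_not _ _ _).symm
    have hgd : ∑ α ∈ N, gdiff x α
        = ∑ α ∈ N, lenAux (-(α x)) - ∑ α ∈ N, lenAux (α x) := by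
      rw [← Finset.sum_sub_distrib]
      exact Finset.sum_congr rfl (fun a _ => rfl)
    rw [hs1, hs2, hAeq, hNeq, hgd]
    ring
  -- β belongs to N
  have hsgβ : P.sg β β = -β := by
    rw [sg, h2β]
    module
  have hβN : β ∈ N := (hmemN β).mpr ⟨hβ, by rw [hsgβ]; exact P.neg_not_pos β hβ⟩
  have herase : ∑ α ∈ N, gdiff x α = gdiff x β + ∑ α ∈ N.erase β, gdiff x α :=
    (Finset.add_sum_erase N _ hβN).symm
  -- involution on N.erase β
  have hι : ∀ a ∈ N.erase β, -(P.sg β a) ∈ N.erase β := by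
    intro a ha
    obtain ⟨hne, haN⟩ := Finset.mem_erase.mp ha
    obtain ⟨h1, h2⟩ := (hmemN a).mp haN
    have hmem : -(P.sg β a) ∈ P.pos := by
      rcases (P.mem_roots_iff _).mp (P.sg_mem hβR (P.pos_subset h1)) with hh | hh
      · exact absurd hh h2
      · exact hh
    refine Finset.mem_erase.mpr ⟨?_, (hmemN _).mpr ⟨hmem, ?_⟩⟩
    · intro hcc
      apply hne
      have := congrArg (fun y => -(P.sg β y)) hcc
      simpa [P.sg_neg, P.sg_sg hβR, hsgβ] using this
    · rw [P.sg_neg, P.sg_sg hβR]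
      exact P.neg_not_pos a h1
  have hreix : ∑ a ∈ N.erase β, gdiff x (-(P.sg β a)) = ∑ a ∈ N.erase β, gdiff x a := by
    refine Finset.sum_nbij' (fun a => -(P.sg β a)) (fun a => -(P.sg β a)) hι hι ?_ ?_ ?_
    · intro a _; rw [P.sg_neg, P.sg_sg hβR, neg_neg]
    · intro a _; rw [P.sg_neg, P.sg_sg hβR, neg_neg]
    · intro a _; rfl
  have htwo : 2 * ∑ a ∈ N.erase β, gdiff x a
      = ∑ a ∈ N.erase β, (gdiff x a + gdiff x (-(P.sg β a))) := by
    rw [Finset.sum_add_distrib, hreix]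
    ring
  -- pairing values
  have hcge : ∀ a ∈ N, 1 ≤ a (P.coroot β) := by
    intro a ha
    obtain ⟨h1, h2⟩ := (hmemN a).mp ha
    exact P.one_le_pairing hβ h1 h2
  have hvals : ∀ a : Dual ℝ V, (-(P.sg β a)) x = a (P.coroot β) * (β x) - a x := by
    intro a
    simp only [sg, LinearMap.neg_apply, LinearMap.sub_apply,
      LinearMap.smul_apply, smul_eq_mul]
    ring
  rcases lt_trichotomy (β x) 0 with hm | hm | hm
  · -- case β x < 0 : length decreases
    have hpair : ∀ a ∈ N.erase β, gdiff x a + gdiff x (-(P.sg β a)) ≤ 0 := by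
      intro a ha
      have haN : a ∈ N := Finset.mem_of_mem_erase ha
      have hc := hcge a haN
      have hv := hvals a
      have hcm : a (P.coroot β) * (β x) ≤ β x := by nlinarith
      rcases lt_trichotomy (a x) 0 with h1 | h1 | h1
      · rw [gdiff_eq_neg_one h1]
        linarith [gdiff_le_one (x := x) (α := -(P.sg β a))]
      · rw [gdiff_eq_zero h1, gdiff_eq_neg_one (by rw [hv, h1]; linarith)]
        norm_num
      · rw [gdiff_eq_one h1, gdiff_eq_neg_one (by rw [hv]; nlinarith)]
        norm_num
    have hsle : ∑ a ∈ N.erase β, gdiff x a ≤ 0 := by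
      have := Finset.sum_nonpos hpair
      rw [← htwo] at this
      linarith
    have : P.lS (P.sRefl β x) - P.lS x < 0 := by
      rw [hD, herase, gdiff_eq_neg_one hm]
      linarith
    exact iff_of_true (by linarith) hm
  · -- case β x = 0 : lengths equal
    have hpair : ∀ a ∈ N.erase β, gdiff x a + gdiff x (-(P.sg β a)) = 0 := by
      intro a ha
      have hv := hvals a
      rw [hm, mul_zero, zero_sub] at hv
      rcases lt_trichotomy (a x) 0 with h1 | h1 | h1
      · rw [gdiff_eq_neg_one h1, gdiff_eq_one (by rw [hv]; linarith)]
        ring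
      · rw [gdiff_eq_zero h1, gdiff_eq_zero (by rw [hv, h1]; ring)]
        ring
      · rw [gdiff_eq_one h1, gdiff_eq_neg_one (by rw [hv]; linarith)]
        ring
    have hs0 : ∑ a ∈ N.erase β, gdiff x a = 0 := by
      have := Finset.sum_congr rfl hpair
      rw [← htwo, Finset.sum_const, smul_zero] at this
      linarith
    have : P.lS (P.sRefl β x) - P.lS x = 0 := by
      rw [hD, herase, gdiff_eq_zero hm, hs0]
      ring
    exact iff_of_false (by linarith) (by linarith)
  · -- case β x > 0 : length increases
    have hpair : ∀ a ∈ N.erase β, 0 ≤ gdiff x a + gdiff x (-(P.sg β a)) := by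
      intro a ha
      have haN : a ∈ N := Finset.mem_of_mem_erase ha
      have hc := hcge a haN
      have hv := hvals a
      have hcm : β x ≤ a (P.coroot β) * (β x) := by nlinarith
      rcases lt_trichotomy (a x) 0 with h1 | h1 | h1
      · rw [gdiff_eq_neg_one h1, gdiff_eq_one (by rw [hv]; nlinarith)]
        norm_num
      · rw [gdiff_eq_zero h1, gdiff_eq_one (by rw [hv, h1]; linarith)]
        norm_num
      · rw [gdiff_eq_one h1]
        linarith [neg_one_le_gdiff (x := x) (α := -(P.sg β a))]
    have hsge : 0 ≤ ∑ a ∈ N.erase β, gdiff x a := by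
      have := Finset.sum_nonneg hpair
      rw [← htwo] at this
      linarith
    have : 0 < P.lS (P.sRefl β x) - P.lS x := by
      rw [hD, herase, gdiff_eq_one hm]
      linarith
    exact iff_of_false (by linarith) (by linarith)

end PosRootSystem
/-- `ℓ^S(s_β λ) < ℓ^S(λ)` if and only if `β(λ) < 0`. -/
theorem lS_sRefl_lt_iff {V : Type*} [AddCommGroup V] [Module ℝ V] (P : PosRootSystem V)
    (β : Module.Dual ℝ V) (hβ : β ∈ P.pos) (x : V) (hx : P.IsCoweight x) :
    P.lS (P.sRefl β x) < P.lS x ↔ β x < 0 := by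
  exact PosRootSystem.lS_sRefl_lt_iff' P β hβ x
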